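/- Let F be a standard Borel space. Then the instance space 𝔻 is itself standard Borel: there exists a topology τ on Finset F such that (Finset F, τ) is a Polish space and the Borel σ-algebra generated by τ coincides with the σ-algebra comapped along ι from the canonical σ-algebra on Measure F. -/

import Mathlib

open MeasureTheory
open scoped ENNReal

/-- The canonical embedding of a database instance (a finite set of facts)
into the space of measures: `S ↦ ∑_{x ∈ S} δ_x`. -/
noncomputable def iota {F : Type*} [MeasurableSpace F] (S : Finset F) : Measure F :=
  ∑ x ∈ S, Measure.dirac x

namespace InstanceSpaceAux

open Set Function

variable {F : Type*}

/-- Transfer of the standard Borel property along a measurable equivalence. -/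
lemma standardBorelSpace_of_measurableEquiv {X Y : Type*} [mX : MeasurableSpace X]
    [mY : MeasurableSpace Y] [h : StandardBorelSpace Y] (f : X ≃ᵐ Y) :
    StandardBorelSpace X := by
  obtain ⟨τ, hB, hP⟩ := h.polish
  letI := τ
  haveI := hB
  haveI := hP
  have hc : ⇑f.toEquiv = ⇑f := rfl
  have hb : @BorelSpace X (TopologicalSpace.induced f τ) mX := by
    refine @BorelSpace.mk X (TopologicalSpace.induced f τ) mX ?_
    rw [borel_comap, ← hB.measurable_eq, f.measurableEmbedding.comap_eq]
  have hp : @PolishSpace X (TopologicalSpace.induced f τ) := by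
    have := f.toEquiv.polishSpace_induced
    rwa [hc] at this
  exact ⟨⟨TopologicalSpace.induced f τ, hb, hp⟩⟩

lemma iota_apply [MeasurableSpace F] (S : Finset F) {A : Set F} (hA : MeasurableSet A) :
    iota S A = ∑ x ∈ S, A.indicator (1 : F → ℝ≥0∞) x := by
  rw [iota, Measure.finset_sum_apply]
  exact Finset.sum_congr rfl fun x _ => Measure.dirac_apply' x hA

open scoped Classical in
lemma iota_apply_card [MeasurableSpace F] (S : Finset F) {A : Set F} (hA : MeasurableSet A) :
    iota S A = ((S.filter fun x => x ∈ A).card : ℝ≥0∞) := by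
  rw [iota_apply S hA, ← Finset.sum_boole]
  refine Finset.sum_congr rfl fun x _ => ?_
  simp [Set.indicator_apply]

/-- The candidate Borel isomorphism onto a subset of `ℕ × (ℕ → ℝ)`:
cardinality together with the sorted list of the images of the elements under `e`. -/
noncomputable def gmap (e : F → ℝ) (S : Finset F) : ℕ × (ℕ → ℝ) :=
  (S.card, fun n => ((S.image e).sort (· ≤ ·)).getD n 0)

lemma sort_getD_lt_iff (T : Finset ℝ) (n : ℕ) (t : ℝ) :
    ((T.sort (· ≤ ·)).getD n 0 < t) ↔
      (n + 1 ≤ (T.filter (· < t)).card ∨ (T.card ≤ n ∧ 0 < t)) := by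
  set L := T.sort (· ≤ ·) with hL
  have hlen : L.length = T.card := Finset.length_sort _
  have hs : L.SortedLT := Finset.sortedLT_sort T
  by_cases hn : n < L.length
  · rw [List.getD_eq_getElem L 0 hn]
    have hcard : ¬ T.card ≤ n := by omega
    simp only [hcard, false_and, or_false]
    constructor
    · intro h
      have key : (Finset.range (n + 1)).card ≤ (T.filter (· < t)).card := by
        apply Finset.card_le_card_of_injOn (fun i => L.getD i 0)
        · intro i hi
          simp only [Finset.coe_range, Set.mem_Iio, Finset.mem_coe] at hi ⊢
          have hi' : i < L.length := by omega
          rw [List.getD_eq_getElem L 0 hi', Finset.mem_filter]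
          refine ⟨(Finset.mem_sort (α := ℝ) (· ≤ ·)).1 (List.getElem_mem hi'), ?_⟩
          rcases eq_or_lt_of_le (Nat.lt_succ_iff.mp hi) with h' | h'
          · subst h'; exact h
          · refine lt_trans ?_ h
            exact hs.strictMono_get (show (⟨i, hi'⟩ : Fin L.length) < ⟨n, hn⟩ from h')
        · intro i hi j hj hij
          have hi0 : i < n + 1 := by simpa using hi
          have hj0 : j < n + 1 := by simpa using hj
          have hi' : i < L.length := by omega
          have hj' : j < L.length := by omega
          have hij' : L.getD i 0 = L.getD j 0 := hij
          rw [List.getD_eq_getElem L 0 hi', List.getD_eq_getElem L 0 hj'] at hij'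
          have := hs.strictMono_get.injective
            (a₁ := (⟨i, hi'⟩ : Fin L.length)) (a₂ := ⟨j, hj'⟩) (by simpa using hij')
          simpa using this
      simpa using key
    · intro h
      by_contra hlt
      push_neg at hlt
      have hsub : T.filter (· < t) ⊆ (Finset.range n).image (fun i => L.getD i 0) := by
        intro y hy
        rw [Finset.mem_filter] at hy
        obtain ⟨hyT, hyt⟩ := hy
        have hyL : y ∈ L := (Finset.mem_sort (α := ℝ) (· ≤ ·)).2 hyT
        obtain ⟨i, hi, hio⟩ := List.mem_iff_getElem.1 hyL
        have hin : i < n := by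
          by_contra hni
          push_neg at hni
          have hle2 : L[n] ≤ L[i] :=
            hs.strictMono_get.monotone (show (⟨n, hn⟩ : Fin L.length) ≤ ⟨i, hi⟩ from hni)
          rw [hio] at hle2
          exact absurd (lt_of_le_of_lt (hlt.trans hle2) hyt) (lt_irrefl _)
        rw [Finset.mem_image]
        exact ⟨i, Finset.mem_range.2 hin, by rw [List.getD_eq_getElem L 0 hi, hio]⟩
      have h2 := (Finset.card_le_card hsub).trans Finset.card_image_le
      rw [Finset.card_range] at h2
      omega
  · rw [List.getD_eq_default L 0 (le_of_not_gt hn)]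
    have hfle := Finset.card_filter_le T (· < t)
    have h1 : ¬ (n + 1 ≤ (T.filter (· < t)).card) := by omega
    have h2 : T.card ≤ n := by omega
    simp [h1, h2]

lemma gmap_injective (e : F → ℝ) (he : Function.Injective e) :
    Function.Injective (gmap (F := F) e) := by
  intro S T h
  have h1 : S.card = T.card := congrArg Prod.fst h
  have h2 := congrArg Prod.snd h
  have hcS : (S.image e).card = S.card := Finset.card_image_of_injective _ he
  have hcT : (T.image e).card = T.card := Finset.card_image_of_injective _ he
  have hLen : ((S.image e).sort (· ≤ ·)).length = ((T.image e).sort (· ≤ ·)).length := by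
    simp [Finset.length_sort, hcS, hcT, h1]
  have hlists : (S.image e).sort (· ≤ ·) = (T.image e).sort (· ≤ ·) := by
    apply List.ext_getElem hLen
    intro i hi1 hi2
    have := congrFun h2 i
    simp only [gmap] at this
    rwa [List.getD_eq_getElem _ 0 hi1, List.getD_eq_getElem _ 0 hi2] at this
  have himg : S.image e = T.image e := by
    have := congrArg List.toFinset hlists
    rwa [Finset.sort_toFinset, Finset.sort_toFinset] at this
  exact Finset.image_injective he himg

lemma list_sum_map_eq (L : List ℝ) (h : ℝ → ℝ≥0∞) :
    (L.map h).sum = ∑ i ∈ Finset.range L.length, h (L.getD i 0) := by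
  induction L with
  | nil => simp
  | cons a L ih => simp [Finset.sum_range_succ', ih, add_comm]

lemma list_sum_sort (T : Finset ℝ) (h : ℝ → ℝ≥0∞) :
    ((T.sort (· ≤ ·)).map h).sum = ∑ y ∈ T, h y := by
  rw [Finset.sum_eq_multiset_sum, ← Finset.sort_eq T (· ≤ ·), Multiset.map_coe,
    Multiset.sum_coe]

lemma sum_range_gmap [MeasurableSpace F] (e : F → ℝ) (he : Function.Injective e)
    (S : Finset F) (h : ℝ → ℝ≥0∞) :
    ∑ i ∈ Finset.range (gmap e S).1, h ((gmap e S).2 i) = ∑ x ∈ S, h (e x) := by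
  have hlen : ((S.image e).sort (· ≤ ·)).length = S.card := by
    rw [Finset.length_sort, Finset.card_image_of_injective _ he]
  calc ∑ i ∈ Finset.range (gmap e S).1, h ((gmap e S).2 i)
      = ∑ i ∈ Finset.range ((S.image e).sort (· ≤ ·)).length,
          h (((S.image e).sort (· ≤ ·)).getD i 0) := by rw [hlen]; rfl
    _ = (((S.image e).sort (· ≤ ·)).map h).sum := (list_sum_map_eq _ h).symm
    _ = ∑ y ∈ S.image e, h y := list_sum_sort _ h
    _ = ∑ x ∈ S, h (e x) := Finset.sum_image (fun x _ y _ hxy => he hxy)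

lemma iota_eq_comp [MeasurableSpace F] (e : F → ℝ) (he : MeasurableEmbedding e)
    {s : Set F} (hs : MeasurableSet s) (S : Finset F) :
    iota S s = ∑ i ∈ Finset.range (gmap e S).1,
      (e '' s).indicator (1 : ℝ → ℝ≥0∞) ((gmap e S).2 i) := by
  rw [sum_range_gmap e he.injective S, iota_apply S hs]
  refine Finset.sum_congr rfl fun x _ => ?_
  by_cases hx : x ∈ s
  · rw [Set.indicator_of_mem hx, Set.indicator_of_mem (Set.mem_image_of_mem e hx)]
    rfl
  · rw [Set.indicator_of_notMem hx,
      Set.indicator_of_notMem (fun hc => hx (he.injective.mem_set_image.1 hc))]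

end InstanceSpaceAux

open InstanceSpaceAux Set Function in
/-- If `F` is standard Borel, the instance space `𝔻 = Finset F`, equipped with the
σ-algebra comapped along `ι` from the canonical σ-algebra on `Measure F`, is
standard Borel: there is a Polish topology on `Finset F` whose Borel σ-algebra
is exactly that σ-algebra. -/
theorem instanceSpace_standardBorel (F : Type*) [MeasurableSpace F] [StandardBorelSpace F] :
    ∃ τ : TopologicalSpace (Finset F),
      @PolishSpace (Finset F) τ ∧
      @borel (Finset F) τ =
        MeasurableSpace.comap iota (inferInstance : MeasurableSpace (Measure F)) := by
  classical
  obtain ⟨e, he⟩ := exists_measurableEmbedding_real F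
  letI m : MeasurableSpace (Finset F) := MeasurableSpace.comap iota inferInstance
  suffices h : StandardBorelSpace (Finset F) by
    obtain ⟨τ, hB, hP⟩ := h.polish
    exact ⟨τ, hP, hB.measurable_eq.symm⟩
  have hiota : Measurable (iota : Finset F → Measure F) := Measurable.of_comap_le le_rfl
  -- the cardinality map is measurable
  have hcard : Measurable fun S : Finset F => S.card := by
    apply measurable_to_countable'
    intro k
    have hpre : (fun S : Finset F => S.card) ⁻¹' {k}
        = (fun S : Finset F => iota S Set.univ) ⁻¹' {(k : ℝ≥0∞)} := by
      ext S
      simp [iota_apply_card S MeasurableSet.univ, Nat.cast_inj]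
    rw [hpre]
    exact (Measure.measurable_coe MeasurableSet.univ).comp hiota (measurableSet_singleton _)
  -- each coordinate of `gmap e` is measurable
  have hcoord : ∀ n : ℕ, Measurable fun S : Finset F => (gmap e S).2 n := by
    intro n
    apply measurable_of_Iio
    intro t
    have hA : MeasurableSet (e ⁻¹' Set.Iio t) := he.measurable measurableSet_Iio
    have hset : (fun S : Finset F => (gmap e S).2 n) ⁻¹' Set.Iio t
        = (fun S : Finset F => iota S (e ⁻¹' Set.Iio t)) ⁻¹' Set.Ici ((n : ℝ≥0∞) + 1)
          ∪ {S : Finset F | S.card ≤ n ∧ 0 < t} := by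
      ext S
      simp only [Set.mem_preimage, Set.mem_Iio, Set.mem_union, Set.mem_Ici, Set.mem_setOf_eq]
      rw [show (gmap e S).2 n = ((S.image e).sort (· ≤ ·)).getD n 0 from rfl,
        sort_getD_lt_iff]
      have hfilter : ((S.image e).filter (· < t)).card
          = (S.filter fun x => e x ∈ Set.Iio t).card := by
        rw [Finset.filter_image, Finset.card_image_of_injective _ he.injective]
        congr 1
      have hiov : iota S (e ⁻¹' Set.Iio t)
          = ((S.filter fun x => x ∈ e ⁻¹' Set.Iio t).card : ℝ≥0∞) := iota_apply_card S hA
      have hiov' : iota S (e ⁻¹' Set.Iio t)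
          = ((S.filter fun x => e x ∈ Set.Iio t).card : ℝ≥0∞) := by
        rw [hiov]
        congr 1
      have hcast : ((n : ℝ≥0∞) + 1 ≤ iota S (e ⁻¹' Set.Iio t))
          ↔ n + 1 ≤ ((S.image e).filter (· < t)).card := by
        rw [hiov', hfilter]
        rw [show ((n : ℝ≥0∞) + 1) = ((n + 1 : ℕ) : ℝ≥0∞) by push_cast; ring]
        exact Nat.cast_le
      rw [hcast, Finset.card_image_of_injective S he.injective]
    rw [hset]
    refine MeasurableSet.union
      ((Measure.measurable_coe hA).comp hiota measurableSet_Ici) ?_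
    by_cases ht : 0 < t
    · simp only [ht, and_true]
      exact hcard measurableSet_Iic
    · simp only [ht, and_false, Set.setOf_false]
      exact MeasurableSet.empty
  have hg : Measurable (gmap e : Finset F → ℕ × (ℕ → ℝ)) :=
    Measurable.prod hcard (measurable_pi_lambda _ hcoord)
  -- `iota` factors measurably through `gmap e`
  have hiota_g : Measurable[MeasurableSpace.comap (gmap e) inferInstance]
      (iota : Finset F → Measure F) := by
    refine @Measure.measurable_of_measurable_coe F (Finset F) _
      (MeasurableSpace.comap (gmap e) inferInstance) iota ?_
    intro s hs
    have hΦ : Measurable fun p : ℕ × (ℕ → ℝ) =>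
        ∑ i ∈ Finset.range p.1, (e '' s).indicator (1 : ℝ → ℝ≥0∞) (p.2 i) := by
      have h1 : Measurable fun q : (ℕ → ℝ) × ℕ =>
          ∑ i ∈ Finset.range q.2, (e '' s).indicator (1 : ℝ → ℝ≥0∞) (q.1 i) := by
        apply measurable_from_prod_countable_left
        intro k
        show Measurable fun q : ℕ → ℝ =>
          ∑ i ∈ Finset.range k, (e '' s).indicator (1 : ℝ → ℝ≥0∞) (q i)
        apply Finset.measurable_sum
        intro i _
        exact (measurable_one.indicator (he.measurableSet_image' hs)).comp
          (measurable_pi_apply i)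
      exact h1.comp measurable_swap
    have hfac : (fun S : Finset F => iota S s)
        = (fun p : ℕ × (ℕ → ℝ) =>
            ∑ i ∈ Finset.range p.1, (e '' s).indicator (1 : ℝ → ℝ≥0∞) (p.2 i)) ∘ gmap e := by
      funext S
      exact iota_eq_comp e he hs S
    rw [hfac]
    exact hΦ.comp (Measurable.of_comap_le le_rfl)
  have heq : MeasurableSpace.comap (gmap e) inferInstance = m :=
    le_antisymm (measurable_iff_comap_le.1 hg) (measurable_iff_comap_le.1 hiota_g)
  -- the range of `gmap e` is measurable
  have hrange_eq : Set.range (gmap e) =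
      {p : ℕ × (ℕ → ℝ) | (∀ i j : ℕ, i < j → j < p.1 → p.2 i < p.2 j) ∧
        (∀ i : ℕ, p.1 ≤ i → p.2 i = 0) ∧ (∀ i : ℕ, i < p.1 → p.2 i ∈ Set.range e)} := by
    ext p
    constructor
    · rintro ⟨S, rfl⟩
      have hlen : ((S.image e).sort (· ≤ ·)).length = S.card := by
        rw [Finset.length_sort, Finset.card_image_of_injective _ he.injective]
      have hs : ((S.image e).sort (· ≤ ·)).SortedLT := Finset.sortedLT_sort _
      refine ⟨fun i j hij hj => ?_, fun i hi => ?_, fun i hi => ?_⟩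
      · have hj' : j < ((S.image e).sort (· ≤ ·)).length := by
          rw [hlen]; exact hj
        have hi' : i < ((S.image e).sort (· ≤ ·)).length := lt_trans hij hj'
        show ((S.image e).sort (· ≤ ·)).getD i 0 < ((S.image e).sort (· ≤ ·)).getD j 0
        rw [List.getD_eq_getElem _ 0 hi', List.getD_eq_getElem _ 0 hj']
        exact hs.strictMono_get (show (⟨i, hi'⟩ : Fin _) < ⟨j, hj'⟩ from hij)
      · show ((S.image e).sort (· ≤ ·)).getD i 0 = 0
        exact List.getD_eq_default _ 0 (by rw [hlen]; exact hi)
      · have hi' : i < ((S.image e).sort (· ≤ ·)).length := by rw [hlen]; exact hi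
        show ((S.image e).sort (· ≤ ·)).getD i 0 ∈ Set.range e
        rw [List.getD_eq_getElem _ 0 hi']
        have hmem : ((S.image e).sort (· ≤ ·))[i] ∈ S.image e :=
          (Finset.mem_sort (α := ℝ) (· ≤ ·)).1 (List.getElem_mem hi')
        obtain ⟨x, -, hx⟩ := Finset.mem_image.1 hmem
        exact ⟨x, hx⟩
    · rintro ⟨hmono, hzero, hrng⟩
      obtain ⟨k, x⟩ := p
      simp only at hmono hzero hrng
      choose y hy using hrng
      set S : Finset F := Finset.univ.image (fun i : Fin k => y i.1 i.2) with hS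
      have hxinj : Set.InjOn x (Finset.range k : Set ℕ) := by
        intro i hi j hj hij
        simp only [Finset.coe_range, Set.mem_Iio] at hi hj
        by_contra hne
        rcases lt_or_gt_of_ne hne with h' | h'
        · exact absurd hij (ne_of_lt (hmono i j h' hj))
        · exact absurd hij.symm (ne_of_lt (hmono j i h' hi))
      have himg : S.image e = (Finset.range k).image x := by
        rw [hS, Finset.image_image]
        ext r
        simp only [Finset.mem_image, Finset.mem_univ, true_and, Function.comp,
          Finset.mem_range]
        constructor
        · rintro ⟨i, rfl⟩
          exact ⟨i.1, i.2, (hy i.1 i.2).symm ▸ rfl⟩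
        · rintro ⟨i, hi, rfl⟩
          exact ⟨⟨i, hi⟩, hy i hi⟩
      have hnodup : ((List.range k).map x).Nodup := by
        refine List.Nodup.map_on ?_ (List.nodup_range (n := k))
        intro i hi j hj hij
        exact hxinj (by simpa using List.mem_range.1 hi) (by simpa using List.mem_range.1 hj) hij
      have hsorted : ((List.range k).map x).Pairwise (· ≤ ·) := by
        rw [List.pairwise_map]
        refine (List.pairwise_lt_range (n := k)).imp_of_mem ?_
        intro i j hi hj hij
        exact le_of_lt (hmono i j hij (List.mem_range.1 hj))
      have hsort : (S.image e).sort (· ≤ ·) = (List.range k).map x := by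
        have hTF : S.image e = ((List.range k).map x).toFinset := by
          rw [himg]
          ext r
          simp
        rw [hTF]
        exact (List.toFinset_sort (· ≤ ·) hnodup).2 hsorted
      have hcardS : S.card = k := by
        have h1 : (S.image e).card = S.card := Finset.card_image_of_injective _ he.injective
        have h2 : ((Finset.range k).image x).card = k := by
          rw [Finset.card_image_of_injOn hxinj, Finset.card_range]
        rw [← h1, himg, h2]
      refine ⟨S, ?_⟩
      rw [gmap]
      refine Prod.ext hcardS (funext fun n => ?_)
      show ((S.image e).sort (· ≤ ·)).getD n 0 = x n
      rw [hsort]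
      by_cases hn : n < k
      · rw [List.getD_eq_getElem _ 0 (by simpa using hn)]
        simp
      · rw [List.getD_eq_default _ 0 (by simpa using le_of_not_gt hn)]
        exact (hzero n (le_of_not_gt hn)).symm
  have hrange : MeasurableSet (Set.range (gmap e)) := by
    rw [hrange_eq, Set.setOf_and, Set.setOf_and]
    refine MeasurableSet.inter ?_ (MeasurableSet.inter ?_ ?_)
    · rw [show {p : ℕ × (ℕ → ℝ) | ∀ i j : ℕ, i < j → j < p.1 → p.2 i < p.2 j}
        = ⋂ (i : ℕ) (j : ℕ), {p : ℕ × (ℕ → ℝ) | i < j → j < p.1 → p.2 i < p.2 j} by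
          ext p; simp]
      refine MeasurableSet.iInter fun i => MeasurableSet.iInter fun j => ?_
      by_cases hij : i < j
      · simp only [hij, true_implies]
        rw [show {p : ℕ × (ℕ → ℝ) | j < p.1 → p.2 i < p.2 j}
          = {p : ℕ × (ℕ → ℝ) | p.1 ≤ j} ∪ {p : ℕ × (ℕ → ℝ) | p.2 i < p.2 j} by
            ext p; simp [imp_iff_not_or]]
        refine MeasurableSet.union (measurable_fst measurableSet_Iic) ?_
        exact measurableSet_lt (measurable_snd.eval (a := i)) (measurable_snd.eval (a := j))
      · simp only [hij, false_implies, Set.setOf_true]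
        exact MeasurableSet.univ
    · rw [show {p : ℕ × (ℕ → ℝ) | ∀ i : ℕ, p.1 ≤ i → p.2 i = 0}
        = ⋂ (i : ℕ), ({p : ℕ × (ℕ → ℝ) | i < p.1} ∪ {p : ℕ × (ℕ → ℝ) | p.2 i = 0}) by
          ext p; simp [imp_iff_not_or, Set.mem_iInter]]
      refine MeasurableSet.iInter fun i => MeasurableSet.union ?_ ?_
      · exact measurable_fst measurableSet_Ioi
      · exact ((measurable_pi_apply i).comp measurable_snd) (measurableSet_singleton 0)
    · rw [show {p : ℕ × (ℕ → ℝ) | ∀ i : ℕ, i < p.1 → p.2 i ∈ Set.range e}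
        = ⋂ (i : ℕ), ({p : ℕ × (ℕ → ℝ) | p.1 ≤ i} ∪ {p : ℕ × (ℕ → ℝ) | p.2 i ∈ Set.range e}) by
          ext p; simp [imp_iff_not_or, Set.mem_iInter]]
      refine MeasurableSet.iInter fun i => MeasurableSet.union ?_ ?_
      · exact measurable_fst measurableSet_Iic
      · exact ((measurable_pi_apply i).comp measurable_snd) he.measurableSet_range
  have hemb : MeasurableEmbedding (gmap e : Finset F → ℕ × (ℕ → ℝ)) := by
    refine ⟨gmap_injective e he.injective, hg, fun s hs => ?_⟩
    rw [← heq] at hs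
    obtain ⟨B, hB, rfl⟩ := hs
    rw [Set.image_preimage_eq_inter_range]
    exact hB.inter hrange
  haveI := hrange.standardBorel
  exact standardBorelSpace_of_measurableEquiv hemb.equivRange
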